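/- Let G and A be groups and let τ, σ : A^G → A^G be group cellular automata such that σ ∘ τ = id. Then σ is post-surjective: for all x, y ∈ A^G with y asymptotic to σ(x), there exists z ∈ A^G asymptotic to x such that σ(z) = y. -/
import Mathlib


/-- A cellular automaton over the group `G` and the alphabet `A`. -/
def IsCellularAutomaton {G A : Type*} [Group G] (τ : (G → A) → (G → A)) : Prop :=
  ∃ (M : Finset G) (μ : (M → A) → A),
    ∀ (c : G → A) (g : G), τ c g = μ (fun m => c (g * m.1))

/-- Two configurations are asymptotic if they agree outside a finite subset. -/
def Asymptotic {G A : Type*} (x y : G → A) : Prop :=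
  {g : G | x g ≠ y g}.Finite

/-- if `τ, σ` are group cellular automata with `σ ∘ τ = id`, then
`σ` is post-surjective. -/
theorem stmt6 {G A : Type*} [Group G] [Group A] (τ σ : (G → A) → (G → A))
    (hτ : IsCellularAutomaton τ) (hσ : IsCellularAutomaton σ)
    (hτhom : ∀ x y : G → A, τ (x * y) = τ x * τ y)
    (hσhom : ∀ x y : G → A, σ (x * y) = σ x * σ y)
    (hst : σ ∘ τ = id) :
    ∀ x y : G → A, Asymptotic y (σ x) →
      ∃ z : G → A, Asymptotic z x ∧ σ z = y := by
  intro x y hxy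
  obtain ⟨M, μ, hμ⟩ := hτ
  -- τ(1) = 1
  have hτ1 : τ 1 = 1 := by
    have h := hτhom 1 1
    rw [one_mul] at h
    have := mul_right_cancel (a := τ 1) (b := τ 1) (c := 1)
    calc τ 1 = τ 1 * τ 1 * (τ 1)⁻¹ := by group
    _ = τ 1 * (τ 1)⁻¹ := by rw [← h]
    _ = 1 := by group
  set w : G → A := y * (σ x)⁻¹ with hw
  have hwfin : {g : G | w g ≠ 1}.Finite := by
    apply hxy.subset
    intro g hg
    simp only [hw, Set.mem_setOf_eq, Pi.mul_apply, Pi.inv_apply] at hg ⊢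
    intro h; exact hg (by rw [h]; group)
  refine ⟨τ w * x, ?_, ?_⟩
  · -- asymptotic: {g | τ w g * x g ≠ x g} ⊆ image of product
    have hsub : {g : G | (τ w * x) g ≠ x g} ⊆
        (fun p : G × G => p.1 * p.2⁻¹) '' ({g : G | w g ≠ 1} ×ˢ (M : Set G)) := by
      intro g hg
      simp only [Set.mem_setOf_eq, Pi.mul_apply] at hg
      have hτwg : τ w g ≠ 1 := by
        intro h; exact hg (by rw [h, one_mul])
      have : ∃ m : M, w (g * m.1) ≠ 1 := by
        by_contra hc
        push_neg at hc
        apply hτwg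
        have : τ w g = τ 1 g := by
          rw [hμ w g, hμ 1 g]
          congr 1
          funext m
          simpa using hc m
        rw [this, hτ1]; rfl
      obtain ⟨m, hm⟩ := this
      exact ⟨(g * m.1, m.1), ⟨hm, m.2⟩, by group⟩
    exact Set.Finite.subset ((hwfin.prod M.finite_toSet).image _) hsub
  · have hστw : σ (τ w) = w := congrFun hst w
    rw [hσhom, hστw, hw]
    funext g
    simp only [Pi.mul_apply, Pi.inv_apply]
    group
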